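/- Let Û and U be identically distributed, with g(U) uncorrelated with h(X) and with g(Û), and Cov(g(Û),g(Û)) = Cov(g(U),g(U)) invertible. Then the gain minimizing trace Cov(Z^h, Z^h) for Z^h = h(X) - S(g(Û)-g(U)) is S = (1/2) Cov(h(X), g(Û)) Cov(g(Û), g(Û))^{-1}. -/

import Mathlib

open MeasureTheory Matrix
open scoped ENNReal NNReal
set_option linter.unusedSectionVars false
set_option linter.unusedVariables false

/-- Component-wise mean of a random vector. -/
noncomputable def rmean {Ω : Type*} [MeasureSpace Ω] {ι : Type*}
    (X : Ω → ι → ℝ) : ι → ℝ := fun i => ∫ ω, X ω i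

/-- Covariance matrix of two random vectors. -/
noncomputable def rcov {Ω : Type*} [MeasureSpace Ω] {ι κ : Type*}
    (X : Ω → ι → ℝ) (Y : Ω → κ → ℝ) : Matrix ι κ ℝ :=
  Matrix.of fun i j => ∫ ω, (X ω i - rmean X i) * (Y ω j - rmean Y j)



section Aux
variable {Ω : Type*} [MeasureSpace Ω] [IsProbabilityMeasure (volume : Measure Ω)]

lemma memL2_mul_integrable {f g : Ω → ℝ} (hf : MemLp f 2) (hg : MemLp g 2) :
    Integrable (fun ω => f ω * g ω) := by
  have h : (1 : ℝ≥0∞)/1 = 1/2 + 1/2 := by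
    rw [ENNReal.add_halves, div_one]
  have := MemLp.smul (φ := f) (r := 1) hg hf
  rw [memLp_one_iff_integrable] at this
  exact this

lemma centered_memL2 {f : Ω → ℝ} (hf : MemLp f 2) (c : ℝ) :
    MemLp (fun ω => f ω - c) 2 :=
  hf.sub (memLp_const c)

lemma rcov_apply {ι κ : Type*} (X : Ω → ι → ℝ) (Y : Ω → κ → ℝ) (i : ι) (j : κ) :
    rcov X Y i j = ∫ ω, (X ω i - rmean X i) * (Y ω j - rmean Y j) := rfl

lemma rcov_transpose {ι κ : Type*} (X : Ω → ι → ℝ) (Y : Ω → κ → ℝ) :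
    (rcov X Y)ᵀ = rcov Y X := by
  ext i j
  simp only [transpose_apply, rcov_apply]
  congr 1; ext ω; ring

end Aux

section Main
variable {Ω : Type*} [MeasureSpace Ω] [IsProbabilityMeasure (volume : Measure Ω)]

lemma rcov_sub_mulVec {m : ℕ} (H C : Ω → Fin m → ℝ)
    (hH : ∀ i, MemLp (fun ω => H ω i) 2) (hC : ∀ i, MemLp (fun ω => C ω i) 2)
    (S : Matrix (Fin m) (Fin m) ℝ) :
    rcov (fun ω => H ω - S.mulVec (C ω)) (fun ω => H ω - S.mulVec (C ω))
      = rcov H H - rcov H C * Sᵀ - S * rcov C H + S * rcov C C * Sᵀ := by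
  have hHint : ∀ i, Integrable (fun ω => H ω i) := fun i => (hH i).integrable one_le_two
  have hCint : ∀ i, Integrable (fun ω => C ω i) := fun i => (hC i).integrable one_le_two
  set Z : Ω → Fin m → ℝ := fun ω => H ω - S.mulVec (C ω) with hZdef
  have hZapp : ∀ (ω : Ω) (i : Fin m), Z ω i = H ω i - ∑ k, S i k * C ω k := by
    intro ω i; simp [hZdef, Matrix.mulVec, dotProduct]
  have hmean : ∀ i, rmean Z i = rmean H i - ∑ k, S i k * rmean C k := by
    intro i
    have h1 : rmean Z i = ∫ ω, (H ω i - ∑ k, S i k * C ω k) := by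
      rw [show rmean Z i = ∫ ω, Z ω i from rfl]
      exact integral_congr_ae (Filter.Eventually.of_forall fun ω => hZapp ω i)
    rw [h1, integral_sub (hHint i) (integrable_finset_sum _ fun k _ => (hCint k).const_mul _),
      integral_finset_sum _ fun k _ => (hCint k).const_mul _]
    simp only [rmean]
    congr 1
    exact Finset.sum_congr rfl fun k _ => integral_const_mul _ _
  set Hc : Fin m → Ω → ℝ := fun i ω => H ω i - rmean H i with hHc
  set Cc : Fin m → Ω → ℝ := fun k ω => C ω k - rmean C k with hCc
  have hHc2 : ∀ i, MemLp (Hc i) 2 := fun i => (hH i).sub (memLp_const _)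
  have hCc2 : ∀ k, MemLp (Cc k) 2 := fun k => (hC k).sub (memLp_const _)
  have hcent : ∀ (ω : Ω) (i : Fin m), Z ω i - rmean Z i = Hc i ω - ∑ k, S i k * Cc k ω := by
    intro ω i
    rw [hZapp, hmean]
    simp only [hHc, hCc, mul_sub, Finset.sum_sub_distrib]
    ring
  ext i j
  have hexp : ∀ ω, (Hc i ω - ∑ k, S i k * Cc k ω) * (Hc j ω - ∑ l, S j l * Cc l ω)
      = Hc i ω * Hc j ω - (∑ l, S j l * (Hc i ω * Cc l ω)) - (∑ k, S i k * (Cc k ω * Hc j ω))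
        + ∑ k, ∑ l, S i k * S j l * (Cc k ω * Cc l ω) := by
    intro ω
    have e1 : ∑ l, S j l * (Hc i ω * Cc l ω) = Hc i ω * ∑ l, S j l * Cc l ω := by
      rw [Finset.mul_sum]; exact Finset.sum_congr rfl fun l _ => by ring
    have e2 : ∑ k, S i k * (Cc k ω * Hc j ω) = (∑ k, S i k * Cc k ω) * Hc j ω := by
      rw [Finset.sum_mul]; exact Finset.sum_congr rfl fun k _ => by ring
    have e3 : ∑ k, ∑ l, S i k * S j l * (Cc k ω * Cc l ω)
        = (∑ k, S i k * Cc k ω) * (∑ l, S j l * Cc l ω) := by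
      rw [Finset.sum_mul]
      refine Finset.sum_congr rfl fun k _ => ?_
      rw [Finset.mul_sum]
      exact Finset.sum_congr rfl fun l _ => by ring
    rw [e1, e2, e3]; ring
  have hI1 : Integrable (fun ω => Hc i ω * Hc j ω) := memL2_mul_integrable (hHc2 i) (hHc2 j)
  have hI2 : Integrable (fun ω => ∑ l, S j l * (Hc i ω * Cc l ω)) :=
    integrable_finset_sum _ fun l _ => (memL2_mul_integrable (hHc2 i) (hCc2 l)).const_mul _
  have hI3 : Integrable (fun ω => ∑ k, S i k * (Cc k ω * Hc j ω)) :=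
    integrable_finset_sum _ fun k _ => (memL2_mul_integrable (hCc2 k) (hHc2 j)).const_mul _
  have hI4 : Integrable (fun ω => ∑ k, ∑ l, S i k * S j l * (Cc k ω * Cc l ω)) :=
    integrable_finset_sum _ fun k _ => integrable_finset_sum _ fun l _ =>
      (memL2_mul_integrable (hCc2 k) (hCc2 l)).const_mul _
  have lhs_eq : rcov Z Z i j
      = (∫ ω, Hc i ω * Hc j ω) - (∑ l, S j l * ∫ ω, Hc i ω * Cc l ω)
        - (∑ k, S i k * ∫ ω, Cc k ω * Hc j ω)
        + ∑ k, ∑ l, S i k * S j l * ∫ ω, Cc k ω * Cc l ω := by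
    rw [rcov_apply]
    have : (∫ ω, (Z ω i - rmean Z i) * (Z ω j - rmean Z j))
        = ∫ ω, (Hc i ω * Hc j ω - (∑ l, S j l * (Hc i ω * Cc l ω))
            - (∑ k, S i k * (Cc k ω * Hc j ω))
            + ∑ k, ∑ l, S i k * S j l * (Cc k ω * Cc l ω)) := by
      congr 1; ext ω; rw [hcent, hcent, hexp]
    have hI12 : Integrable (fun ω => Hc i ω * Hc j ω - ∑ l, S j l * (Hc i ω * Cc l ω)) :=
      hI1.sub hI2
    have hI123 : Integrable (fun ω => Hc i ω * Hc j ω - (∑ l, S j l * (Hc i ω * Cc l ω))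
        - ∑ k, S i k * (Cc k ω * Hc j ω)) := hI12.sub hI3
    rw [this, integral_add hI123 hI4, integral_sub hI12 hI3,
      integral_sub hI1 hI2, integral_finset_sum _ fun l _ => (memL2_mul_integrable (hHc2 i) (hCc2 l)).const_mul _,
      integral_finset_sum _ fun k _ => (memL2_mul_integrable (hCc2 k) (hHc2 j)).const_mul _,
      integral_finset_sum _ fun k _ => (integrable_finset_sum _ fun l _ =>
        (memL2_mul_integrable (hCc2 k) (hCc2 l)).const_mul _)]
    congr 1
    · congr 1
      · congr 1
        exact Finset.sum_congr rfl fun l _ => integral_const_mul _ _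
      · exact Finset.sum_congr rfl fun k _ => integral_const_mul _ _
    · refine Finset.sum_congr rfl fun k _ => ?_
      rw [integral_finset_sum _ fun l _ => (memL2_mul_integrable (hCc2 k) (hCc2 l)).const_mul _]
      exact Finset.sum_congr rfl fun l _ => integral_const_mul _ _
  have hcHH : ∀ a b, rcov H H a b = ∫ ω, Hc a ω * Hc b ω := fun a b => rfl
  have hcHC : ∀ a b, rcov H C a b = ∫ ω, Hc a ω * Cc b ω := fun a b => rfl
  have hcCH : ∀ a b, rcov C H a b = ∫ ω, Cc a ω * Hc b ω := fun a b => rfl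
  have hcCC : ∀ a b, rcov C C a b = ∫ ω, Cc a ω * Cc b ω := fun a b => rfl
  have rhs_eq : (rcov H H - rcov H C * Sᵀ - S * rcov C H + S * rcov C C * Sᵀ) i j
      = rcov H H i j - (∑ l, rcov H C i l * S j l) - (∑ k, S i k * rcov C H k j)
        + ∑ l, (∑ k, S i k * rcov C C k l) * S j l := by
    simp [Matrix.mul_apply, Matrix.sub_apply, Matrix.add_apply, Matrix.transpose_apply]
  have eA : ∑ l, rcov H C i l * S j l = ∑ l, S j l * ∫ ω, Hc i ω * Cc l ω :=
    Finset.sum_congr rfl fun l _ => by rw [hcHC]; ring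
  have eB : ∑ k, S i k * rcov C H k j = ∑ k, S i k * ∫ ω, Cc k ω * Hc j ω :=
    Finset.sum_congr rfl fun k _ => by rw [hcCH]
  have eC : ∑ l, (∑ k, S i k * rcov C C k l) * S j l
      = ∑ k, ∑ l, S i k * S j l * ∫ ω, Cc k ω * Cc l ω := by
    have e1 : ∀ l : Fin m, (∑ k, S i k * rcov C C k l) * S j l
        = ∑ k, S i k * S j l * ∫ ω, Cc k ω * Cc l ω := fun l => by
      rw [Finset.sum_mul]
      exact Finset.sum_congr rfl fun k _ => by rw [hcCC]; ring
    rw [Finset.sum_congr rfl fun l _ => e1 l, Finset.sum_comm]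
  rw [lhs_eq, rhs_eq, hcHH i j, eA, eB, eC]

end Main

section Main2
variable {Ω : Type*} [MeasureSpace Ω] [IsProbabilityMeasure (volume : Measure Ω)]

lemma rcov_sub_right {p q : ℕ} (X : Ω → Fin p → ℝ) (Y W : Ω → Fin q → ℝ)
    (hX : ∀ i, MemLp (fun ω => X ω i) 2) (hY : ∀ j, MemLp (fun ω => Y ω j) 2)
    (hW : ∀ j, MemLp (fun ω => W ω j) 2) :
    rcov X (fun ω => Y ω - W ω) = rcov X Y - rcov X W := by
  have hYint : ∀ j, Integrable (fun ω => Y ω j) := fun j => (hY j).integrable one_le_two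
  have hWint : ∀ j, Integrable (fun ω => W ω j) := fun j => (hW j).integrable one_le_two
  have hmean : ∀ j, rmean (fun ω => Y ω - W ω) j = rmean Y j - rmean W j := by
    intro j
    rw [show rmean (fun ω => Y ω - W ω) j = ∫ ω, (Y ω j - W ω j) from rfl,
      integral_sub (hYint j) (hWint j)]
    rfl
  ext i j
  rw [Matrix.sub_apply, rcov_apply, rcov_apply, rcov_apply]
  have hpt : ∀ ω, (X ω i - rmean X i) * ((fun ω => Y ω - W ω) ω j - rmean (fun ω => Y ω - W ω) j)
      = (X ω i - rmean X i) * (Y ω j - rmean Y j)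
        - (X ω i - rmean X i) * (W ω j - rmean W j) := by
    intro ω
    rw [hmean]
    simp only [Pi.sub_apply]
    ring
  rw [integral_congr_ae (Filter.Eventually.of_forall hpt)]
  exact integral_sub
    (memL2_mul_integrable ((hX i).sub (memLp_const _)) ((hY j).sub (memLp_const _)))
    (memL2_mul_integrable ((hX i).sub (memLp_const _)) ((hW j).sub (memLp_const _)))

lemma rcov_sub_left {p q : ℕ} (X : Ω → Fin p → ℝ) (Y W : Ω → Fin q → ℝ)
    (hX : ∀ i, MemLp (fun ω => X ω i) 2) (hY : ∀ j, MemLp (fun ω => Y ω j) 2)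
    (hW : ∀ j, MemLp (fun ω => W ω j) 2) :
    rcov (fun ω => Y ω - W ω) X = rcov Y X - rcov W X := by
  rw [← rcov_transpose X (fun ω => Y ω - W ω), rcov_sub_right X Y W hX hY hW,
    Matrix.transpose_sub, rcov_transpose, rcov_transpose]

lemma posSemidef_trace_nonneg {m : ℕ} {M : Matrix (Fin m) (Fin m) ℝ} (hM : M.PosSemidef) :
    0 ≤ M.trace := by
  rw [Matrix.trace]
  refine Finset.sum_nonneg fun i _ => ?_
  exact hM.diag_nonneg

end Main2

/-- **Optimal gain for nonlinearly transformed variates.** If `Û` and `U` are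
identically distributed, `g(U)` is uncorrelated with `h(X)` and `g(Û)`, and
`Cov(g(Û),g(Û)) = Cov(g(U),g(U))` is positive definite, then the gain minimizing
`trace Cov(Zʰ,Zʰ)` for `Zʰ = h(X) - S(g(Û)-g(U))` is
`S = (1/2) Cov(h(X),g(Û)) Cov(g(Û),g(Û))⁻¹`. -/
theorem nonlinear_optimal_gain
    {Ω : Type*} [MeasureSpace Ω] [IsProbabilityMeasure (volume : Measure Ω)]
    {n r m : ℕ} (X : Ω → Fin n → ℝ) (Uhat U : Ω → Fin r → ℝ)
    (g : (Fin r → ℝ) → Fin m → ℝ) (h : (Fin n → ℝ) → Fin m → ℝ)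
    (hlaw : (volume : Measure Ω).map Uhat = (volume : Measure Ω).map U)
    (hhX : ∀ i, MemLp (fun ω => h (X ω) i) 2)
    (hgUhat : ∀ i, MemLp (fun ω => g (Uhat ω) i) 2)
    (hgU : ∀ i, MemLp (fun ω => g (U ω) i) 2)
    (huncorr1 : rcov (fun ω => g (U ω)) (fun ω => h (X ω)) = 0)
    (huncorr2 : rcov (fun ω => g (U ω)) (fun ω => g (Uhat ω)) = 0)
    (hcoveq : rcov (fun ω => g (Uhat ω)) (fun ω => g (Uhat ω))
              = rcov (fun ω => g (U ω)) (fun ω => g (U ω)))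
    (hpd : (rcov (fun ω => g (Uhat ω)) (fun ω => g (Uhat ω))).PosDef)
    (Z : Matrix (Fin m) (Fin m) ℝ → Ω → Fin m → ℝ)
    (hZ : ∀ S ω, Z S ω = h (X ω) - S.mulVec (g (Uhat ω) - g (U ω)))
    (Sopt : Matrix (Fin m) (Fin m) ℝ)
    (hSopt : Sopt = (1 / 2 : ℝ) • (rcov (fun ω => h (X ω)) (fun ω => g (Uhat ω))
        * (rcov (fun ω => g (Uhat ω)) (fun ω => g (Uhat ω)))⁻¹)) :
    ∀ S : Matrix (Fin m) (Fin m) ℝ,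
      (rcov (Z Sopt) (Z Sopt)).trace ≤ (rcov (Z S) (Z S)).trace := by
  intro S
  -- abbreviations
  set Hf : Ω → Fin m → ℝ := fun ω => h (X ω) with hHf
  set Gf : Ω → Fin m → ℝ := fun ω => g (Uhat ω) with hGf
  set Ff : Ω → Fin m → ℝ := fun ω => g (U ω) with hFf
  set Cf : Ω → Fin m → ℝ := fun ω => Gf ω - Ff ω with hCf
  set A : Matrix (Fin m) (Fin m) ℝ := rcov Hf Gf with hA
  set B : Matrix (Fin m) (Fin m) ℝ := rcov Gf Gf with hB
  set K : Matrix (Fin m) (Fin m) ℝ := rcov Hf Hf with hK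
  have hCmem : ∀ i, MemLp (fun ω => Cf ω i) 2 := fun i => by
    have := (hgUhat i).sub (hgU i)
    exact this
  -- rcov identities
  have hFG : rcov Ff Gf = 0 := huncorr2
  have hGF : rcov Gf Ff = 0 := by
    rw [← rcov_transpose Ff Gf, hFG, Matrix.transpose_zero]
  have hFH : rcov Ff Hf = 0 := huncorr1
  have hHF : rcov Hf Ff = 0 := by
    rw [← rcov_transpose Ff Hf, hFH, Matrix.transpose_zero]
  have hHC : rcov Hf Cf = A := by
    rw [hCf, rcov_sub_right Hf Gf Ff hhX hgUhat hgU, hHF, sub_zero]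
  have hCH : rcov Cf Hf = Aᵀ := by
    rw [← rcov_transpose Hf Cf, hHC]
  have hCC : rcov Cf Cf = B + B := by
    have e1 : rcov Cf Gf = B := by
      rw [hCf, rcov_sub_left Gf Gf Ff hgUhat hgUhat hgU, hFG, sub_zero]
    have e2 : rcov Cf Ff = -B := by
      rw [hCf, rcov_sub_left Ff Gf Ff hgU hgUhat hgU, hGF, ← hcoveq, zero_sub]
    rw [hCf, rcov_sub_right _ Gf Ff hCmem hgUhat hgU]
    rw [e1, e2, sub_neg_eq_add]
  -- matrix helpers
  have hBsym : Bᵀ = B := by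
    have := hpd.1
    rwa [Matrix.IsHermitian, Matrix.conjTranspose_eq_transpose_of_trivial] at this
  have hdet : IsUnit B.det := isUnit_iff_ne_zero.mpr hpd.det_pos.ne'
  have hSB : Sopt * B = (1 / 2 : ℝ) • A := by
    rw [hSopt, Matrix.smul_mul, Matrix.nonsing_inv_mul_cancel_right _ _ hdet]
  have hA2 : A = (2 : ℝ) • (Sopt * B) := by
    rw [hSB, smul_smul]; norm_num
  have htr : ∀ P Q : Matrix (Fin m) (Fin m) ℝ,
      (P * B * Qᵀ).trace = (Q * B * Pᵀ).trace := by
    intro P Q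
    conv_lhs => rw [← Matrix.trace_transpose]
    rw [Matrix.transpose_mul, Matrix.transpose_mul, Matrix.transpose_transpose, hBsym,
      ← Matrix.mul_assoc]
  have htr2 : ∀ P Q : Matrix (Fin m) (Fin m) ℝ,
      (P * Qᵀ).trace = (Q * Pᵀ).trace := by
    intro P Q
    conv_lhs => rw [← Matrix.trace_transpose]
    rw [Matrix.transpose_mul, Matrix.transpose_transpose]
  -- trace formula
  have htrace : ∀ T : Matrix (Fin m) (Fin m) ℝ, (rcov (Z T) (Z T)).trace
      = K.trace - 2 * (A * Tᵀ).trace + 2 * (T * B * Tᵀ).trace := by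
    intro T
    have hZT : Z T = fun ω => Hf ω - T.mulVec (Cf ω) := funext fun ω => hZ T ω
    rw [hZT, rcov_sub_mulVec Hf Cf hhX hCmem T, ← hK, hHC, hCH, hCC]
    have : T * (B + B) * Tᵀ = T * B * Tᵀ + T * B * Tᵀ := by
      rw [Matrix.mul_add, Matrix.add_mul]
    rw [this, Matrix.trace_add, Matrix.trace_sub, Matrix.trace_sub, Matrix.trace_add]
    have : (T * Aᵀ).trace = (A * Tᵀ).trace := htr2 T A
    rw [this]; ring
  rw [htrace S, htrace Sopt]
  -- quadratic inequality
  have hDB : ((S - Sopt) * B * (S - Sopt)ᵀ).trace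
      = (S * B * Sᵀ).trace - 2 * (S * B * Soptᵀ).trace + (Sopt * B * Soptᵀ).trace := by
    have e : (S - Sopt) * B * (S - Sopt)ᵀ
        = S * B * Sᵀ - S * B * Soptᵀ - (Sopt * B * Sᵀ - Sopt * B * Soptᵀ) := by
      rw [Matrix.transpose_sub]
      noncomm_ring
    rw [e, Matrix.trace_sub, Matrix.trace_sub, Matrix.trace_sub, htr Sopt S]
    ring
  have hpos : 0 ≤ ((S - Sopt) * B * (S - Sopt)ᵀ).trace := by
    refine posSemidef_trace_nonneg ?_
    have := hpd.posSemidef.mul_mul_conjTranspose_same (S - Sopt)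
    rwa [Matrix.conjTranspose_eq_transpose_of_trivial] at this
  have e1 : (A * Sᵀ).trace = 2 * (S * B * Soptᵀ).trace := by
    rw [hA2, Matrix.smul_mul, Matrix.trace_smul, htr Sopt S]
    simp [Matrix.mul_assoc]
  have e2 : (A * Soptᵀ).trace = 2 * (Sopt * B * Soptᵀ).trace := by
    rw [hA2, Matrix.smul_mul, Matrix.trace_smul]
    simp [Matrix.mul_assoc]
  linarith [hpos, hDB, e1, e2]
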